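/- Let m ≥ 1 and let s be an integer with 0 ≤ s ≤ q-1. Then the cube code Cube_q(s,m) has length q^m, dimension (s+1)^m, and minimum distance exactly (q-s)^m. -/

import Mathlib

open MvPolynomial Finset Pointwise

noncomputable section

/-- Evaluation of a multivariate polynomial at all points of `F^m`. -/
def evalPt {F : Type} [Field F] {m : ℕ} (f : MvPolynomial (Fin m) F) : (Fin m → F) → F :=
  fun P => MvPolynomial.eval P f

/-- The monomial code `C_A = ev(F_q[A])`, the evaluations of the polynomials
whose monomial support is contained in `A`. -/
def monomialCode (F : Type) [Field F] (m : ℕ) (A : Set (Fin m →₀ ℕ)) :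
    Set ((Fin m → F) → F) :=
  { v | ∃ f : MvPolynomial (Fin m) F, (↑f.support : Set (Fin m →₀ ℕ)) ⊆ A ∧ v = evalPt f }

/-- Exponent set of the Reed–Muller code `RM_q(s,m)` (empty when `s < 0`). -/
def RMset (q m : ℕ) (s : ℤ) : Set (Fin m →₀ ℕ) :=
  { i | (∀ j, i j < q) ∧ (∑ j, (i j : ℤ)) ≤ s }

/-- Exponent set of the hyperbolic code `Hyp_q(d,m)`. -/
def Hypset (q m d : ℕ) : Set (Fin m →₀ ℕ) :=
  { i | (∀ j, i j < q) ∧ d ≤ ∏ j, (q - i j) }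

/-- Exponent set of the cube code `Cube_q(s,m)`. -/
def Cubeset (m s : ℕ) : Set (Fin m →₀ ℕ) :=
  { i | ∀ j, i j ≤ s }

/-- Minimum distance of a code: least Hamming weight of a nonzero codeword. -/
def minDist {F : Type} [Field F] [Fintype F] [DecidableEq F] {m : ℕ}
    (C : Set ((Fin m → F) → F)) : ℕ :=
  sInf { w | ∃ v ∈ C, v ≠ 0 ∧ hammingNorm v = w }

/-- Hamming distance from a word to a code. -/
def distToCode {F : Type} [Field F] [Fintype F] [DecidableEq F] {m : ℕ}
    (y : (Fin m → F) → F) (C : Set ((Fin m → F) → F)) : ℕ :=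
  sInf { w | ∃ c ∈ C, hammingDist y c = w }

/-- `i`-fold Minkowski sum of `H` with itself (`0`-fold sum is `{0}`). -/
def iMink {m : ℕ} (H : Set (Fin m →₀ ℕ)) : ℕ → Set (Fin m →₀ ℕ)
  | 0 => {0}
  | i + 1 => iMink H i + H

/-- The sets `L(d,r,i)` from the Geil–Matsumoto list-decoding algorithm. -/
def Lset (q m d r i : ℕ) : Set (Fin m →₀ ℕ) :=
  { a | (∀ j, a j < q) ∧ ∀ x ∈ iMink (Hypset q m d) i, a + x ∈ Hypset q m (r + 1) }

section Aux

variable {F : Type} [Field F] [Fintype F] [DecidableEq F]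

lemma aux_univCount {s : ℕ} (u : Polynomial F) (hu : u ≠ 0) (hdeg : u.natDegree ≤ s) :
    Fintype.card F - s ≤ (univ.filter fun t : F => u.eval t ≠ 0).card := by
  classical
  have h0 : (univ.filter fun t : F => u.eval t = 0).card ≤ s := by
    refine le_trans (le_trans (Finset.card_le_card ?_) u.roots.toFinset_card_le)
      (le_trans (Polynomial.card_roots' u) hdeg)
    intro t ht
    simp only [mem_filter, mem_univ, true_and] at ht
    simpa [Multiset.mem_toFinset, Polynomial.mem_roots hu] using ht
  have h1 := Finset.card_filter_add_card_filter_not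
    (s := (univ : Finset F)) (p := fun t : F => u.eval t = 0)
  rw [Finset.card_univ] at h1
  simp only [ne_eq]
  omega

lemma aux_zeroBound {s : ℕ} : ∀ (m : ℕ) (f : MvPolynomial (Fin m) F), f ≠ 0 →
    (∀ j, f.degreeOf j ≤ s) →
    (Fintype.card F - s) ^ m ≤ (univ.filter fun x : Fin m → F => eval x f ≠ 0).card := by
  intro m
  induction m with
  | zero =>
    intro f hf _
    have hmem : (fun _ => (0:F)) ∈ univ.filter fun x : Fin 0 → F => eval x f ≠ 0 := by
      simp only [mem_filter, mem_univ, true_and]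
      rw [eq_C_of_isEmpty f, eval_C]
      intro h; exact hf (by rw [eq_C_of_isEmpty f, h, map_zero])
    simpa using Finset.card_pos.mpr ⟨_, hmem⟩
  | succ m ih =>
    intro f hf hdeg
    set p := finSuccEquiv F m f with hp
    have hpne : p ≠ 0 := by
      simp only [hp, ne_eq, EmbeddingLike.map_eq_zero_iff]
      exact hf
    have hg : p.coeff p.natDegree ≠ 0 := Polynomial.leadingCoeff_ne_zero.mpr hpne
    have hgdeg : ∀ j, (p.coeff p.natDegree).degreeOf j ≤ s := fun j =>
      (degreeOf_coeff_finSuccEquiv f j p.natDegree).trans (hdeg j.succ)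
    have hB := ih (p.coeff p.natDegree) hg hgdeg
    set B := univ.filter fun x : Fin m → F => eval x (p.coeff p.natDegree) ≠ 0 with hBdef
    set S' := univ.filter fun z : Fin (m+1) → F => eval z f ≠ 0 with hS'
    have hcard : S'.card =
        ∑ x ∈ (univ : Finset (Fin m → F)), (S'.filter fun z => Fin.tail z = x).card :=
      Finset.card_eq_sum_card_fiberwise (fun z _ => mem_univ _)
    have key : ∀ x ∈ B, Fintype.card F - s ≤ (S'.filter fun z => Fin.tail z = x).card := by
      intro x hx
      simp only [hBdef, mem_filter, mem_univ, true_and] at hx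
      set u := p.map (MvPolynomial.eval x) with hu
      have hcoef : u.coeff p.natDegree ≠ 0 := by
        rw [hu, Polynomial.coeff_map]; exact hx
      have hune : u ≠ 0 := fun h => hcoef (by rw [h, Polynomial.coeff_zero])
      have hudeg : u.natDegree ≤ s := by
        refine le_trans Polynomial.natDegree_map_le ?_
        rw [hp, natDegree_finSuccEquiv]; exact hdeg 0
      refine le_trans (aux_univCount u hune hudeg)
        (Finset.card_le_card_of_injOn (fun t => Fin.cons t x) ?_ ?_)
      · intro t ht
        simp only [coe_filter, Set.mem_setOf_eq, mem_filter, mem_univ, true_and] at ht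
        simp only [hS', coe_filter, Set.mem_setOf_eq, mem_filter, mem_univ, true_and]
        refine ⟨?_, by simp⟩
        rw [eval_eq_eval_mv_eval']
        exact ht
      · intro a _ b _ hab
        simpa using congrArg (fun z => z 0) hab
    calc (Fintype.card F - s) ^ (m+1)
        = (Fintype.card F - s) ^ m * (Fintype.card F - s) := pow_succ _ _
      _ ≤ B.card * (Fintype.card F - s) := Nat.mul_le_mul_right _ hB
      _ = ∑ _x ∈ B, (Fintype.card F - s) := by rw [Finset.sum_const, smul_eq_mul]
      _ ≤ ∑ x ∈ B, (S'.filter fun z => Fin.tail z = x).card := Finset.sum_le_sum key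
      _ ≤ ∑ x ∈ univ, (S'.filter fun z => Fin.tail z = x).card :=
          Finset.sum_le_sum_of_subset (subset_univ B)
      _ = S'.card := hcard.symm

lemma aux_norm_evalPt {m : ℕ} (f : MvPolynomial (Fin m) F) :
    hammingNorm (evalPt f) = (univ.filter fun x : Fin m → F => eval x f ≠ 0).card := by
  unfold hammingNorm evalPt
  congr 1

lemma aux_cube_codeword (m s : ℕ) (hsq : s ≤ Fintype.card F) :
    ∃ f : MvPolynomial (Fin m) F, (∀ j, f.degreeOf j ≤ s) ∧
      hammingNorm (evalPt f) = (Fintype.card F - s) ^ m := by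
  obtain ⟨S, -, hS⟩ := Finset.exists_subset_card_eq (s := (univ : Finset F)) (n := s)
    (by simpa using hsq)
  refine ⟨∏ j : Fin m, ∏ a ∈ S, (X j - C a), fun j => ?_, ?_⟩
  · refine le_trans (degreeOf_prod_le _ _ _) ?_
    have h1 : ∀ j' : Fin m, degreeOf j (∏ a ∈ S, (X j' - C a)) ≤ if j' = j then s else 0 := by
      intro j'
      refine le_trans (degreeOf_prod_le _ _ _) ?_
      have h2 : ∀ a ∈ S, degreeOf j (X j' - C a) ≤ if j' = j then 1 else 0 := by
        intro a _
        rw [degreeOf_le_iff]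
        intro i hi
        have hi' : i = Finsupp.single j' 1 ∨ i = 0 := by
          rcases Finset.mem_union.mp (MvPolynomial.support_sub _ _ _ hi) with h | h
          · left; simpa [MvPolynomial.support_X] using h
          · right
            by_contra h0
            rw [mem_support_iff, coeff_C, if_neg (fun h' => h0 h'.symm)] at h
            exact h rfl
        rcases hi' with rfl | rfl
        · simp [Finsupp.single_apply]
        · simp
      refine le_trans (Finset.sum_le_sum h2) ?_
      split <;> simp [hS]
    refine le_trans (Finset.sum_le_sum fun j' _ => h1 j') ?_
    simp
  · rw [aux_norm_evalPt]
    have he : (univ.filter fun x : Fin m → F =>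
          eval x (∏ j : Fin m, ∏ a ∈ S, (X j - C a)) ≠ 0) =
        Fintype.piFinset (fun _ : Fin m => Sᶜ) := by
      ext x
      simp only [mem_filter, mem_univ, true_and, Fintype.mem_piFinset, Finset.mem_compl,
        map_prod, map_sub, eval_X, eval_C, Finset.prod_ne_zero_iff, sub_ne_zero, ne_eq]
      constructor
      · intro h j hj
        exact h j trivial (x j) hj rfl
      · intro h j _ a ha he
        subst he
        exact h j ha
    rw [he, Fintype.card_piFinset]
    simp [Finset.card_compl, hS]

/-- The evaluation map as a linear map. -/
def evalLin (F : Type) [Field F] (m : ℕ) :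
    MvPolynomial (Fin m) F →ₗ[F] ((Fin m → F) → F) where
  toFun := evalPt
  map_add' f g := funext fun P => by simp [evalPt]
  map_smul' c f := funext fun P => by
    simp [evalPt, MvPolynomial.smul_eq_C_mul, Pi.smul_apply, smul_eq_mul]

/-- The cube exponent set is in bijection with `Fin m → Fin (s+1)`. -/
def cubeEquiv (m s : ℕ) : ↥(Cubeset m s) ≃ (Fin m → Fin (s+1)) where
  toFun i j := ⟨i.1 j, Nat.lt_succ_of_le (i.2 j)⟩
  invFun v := ⟨Finsupp.equivFunOnFinite.symm (fun j => (v j : ℕ)),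
    fun j => by simp [Nat.lt_succ_iff.mp (v j).isLt]⟩
  left_inv i := by
    apply Subtype.ext
    apply Finsupp.ext
    intro j
    simp
  right_inv v := by
    funext j
    apply Fin.ext
    simp

lemma aux_code_eq_image (m : ℕ) (A : Set (Fin m →₀ ℕ)) :
    monomialCode F m A = ⇑(evalLin F m) '' (restrictSupport F A : Set (MvPolynomial (Fin m) F)) := by
  ext v
  constructor
  · rintro ⟨f, hf, rfl⟩
    exact ⟨f, (mem_restrictSupport_iff (r := f)).mpr hf, rfl⟩
  · rintro ⟨f, hf, rfl⟩
    exact ⟨f, (mem_restrictSupport_iff (r := f)).mp hf, rfl⟩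

lemma aux_span_code (m : ℕ) (A : Set (Fin m →₀ ℕ)) :
    Submodule.span F (monomialCode F m A) = (restrictSupport F A).map (evalLin F m) := by
  rw [aux_code_eq_image, Submodule.span_image, Submodule.span_eq]

end Aux

/-- `Cube_q(s,m)` has length `q^m`, dimension `(s+1)^m`, and minimum
distance exactly `(q-s)^m`. -/
theorem statement11 (F : Type) [Field F] [Fintype F] [DecidableEq F]
    (q m s : ℕ) (hq : Fintype.card F = q) (hm : 1 ≤ m) (hs : s ≤ q - 1) :
    Fintype.card (Fin m → F) = q ^ m ∧
    Module.finrank F (Submodule.span F (monomialCode F m (Cubeset m s))) = (s + 1) ^ m ∧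
    minDist (monomialCode F m (Cubeset m s)) = (q - s) ^ m := by
  have hq1 : 1 ≤ q := hq ▸ Fintype.card_pos
  have hsq : s < q := by omega
  -- the lower bound on Hamming norms of nonzero codewords
  have lower : ∀ v ∈ monomialCode F m (Cubeset m s), v ≠ 0 → (q - s) ^ m ≤ hammingNorm v := by
    rintro v ⟨f, hf, rfl⟩ hv
    have hfne : f ≠ 0 := by
      rintro rfl
      exact hv (funext fun P => by simp [evalPt])
    have hdeg : ∀ j, f.degreeOf j ≤ s := fun j =>
      degreeOf_le_iff.mpr fun i hi => (hf hi) j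
    rw [aux_norm_evalPt, ← hq]
    exact aux_zeroBound m f hfne hdeg
  -- the codeword of weight exactly (q-s)^m
  obtain ⟨f₀, hf₀deg, hf₀norm⟩ := aux_cube_codeword (F := F) m s (by omega)
  rw [hq] at hf₀norm
  have hf₀mem : evalPt f₀ ∈ monomialCode F m (Cubeset m s) :=
    ⟨f₀, fun i hi j => degreeOf_le_iff.mp (hf₀deg j) i hi, rfl⟩
  have hpos : 0 < (q - s) ^ m := pow_pos (by omega) m
  have hf0ne : evalPt f₀ ≠ 0 := by
    intro h
    rw [h, hammingNorm_zero] at hf₀norm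
    omega
  refine ⟨?_, ?_, ?_⟩
  · simp [hq]
  · haveI : Fintype ↥(Cubeset m s) := Fintype.ofEquiv _ (cubeEquiv m s).symm
    have hinj : Function.Injective
        ((evalLin F m).comp (restrictSupport F (Cubeset m s)).subtype) := by
      rw [← LinearMap.ker_eq_bot, LinearMap.ker_eq_bot']
      rintro ⟨f, hf⟩ h0
      apply Subtype.ext
      show f = 0
      by_contra hne
      have hdeg : ∀ j, f.degreeOf j ≤ s := fun j =>
        degreeOf_le_iff.mpr fun i hi => ((mem_restrictSupport_iff (r := f)).mp hf hi) j
      have hzb := aux_zeroBound m f hne hdeg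
      rw [hq] at hzb
      obtain ⟨x, hx⟩ := Finset.card_pos.mp (lt_of_lt_of_le hpos hzb)
      simp only [mem_filter, mem_univ, true_and] at hx
      exact hx (by simpa [evalLin, evalPt] using congrFun h0 x)
    have hrange : (restrictSupport F (Cubeset m s)).map (evalLin F m) =
        LinearMap.range ((evalLin F m).comp (restrictSupport F (Cubeset m s)).subtype) := by
      rw [LinearMap.range_comp, Submodule.range_subtype]
    rw [aux_span_code, hrange, LinearMap.finrank_range_of_inj hinj,
      Module.finrank_eq_card_basis (basisRestrictSupport F _),
      Fintype.card_congr (cubeEquiv m s)]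
    simp
  · unfold minDist
    apply le_antisymm
    · exact Nat.sInf_le ⟨evalPt f₀, hf₀mem, hf0ne, hf₀norm⟩
    · refine le_csInf ⟨_, ⟨evalPt f₀, hf₀mem, hf0ne, hf₀norm⟩⟩ ?_
      rintro w ⟨v, hv, hvne, rfl⟩
      exact lower v hv hvne
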